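/- arXiv:1510.08031 — 2 statements merged into one kernel-verified Lean document; each statement's English description precedes it below -/
import Mathlib

section
/- In the ring QH = ℤ[H,E]/(H² = kE + R, E² = Q), the characteristic polynomial of multiplication by vE (where v is the number of vertices) on the basis {1, H, E, HE} is (λ²-9)² for the triangle case (v=3, k=1, R=0, Q=1), λ(λ³-128) for the tetrahedron case (v=4, k=2, R=0, Q=H), and (λ² - 6λ - 36)² for the octahedron case (v=6, k=5, R=3, Q=E+1). -/
open Polynomial Matrix

/-- The matrix of multiplication by `E` on the free `ℤ`-module with basis `1, H, E, HE` in
the ring `ℤ[H,E]/(H² = kE + r₀ + r₁H, E² = q₀ + q₁H + q₂E)`.  The columns record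
`E·1 = E`, `E·H = HE`, `E·E = q₀ + q₁H + q₂E`, and
`E·HE = q₁r₀ + (q₀ + q₁r₁)H + q₁kE + q₂HE`. -/
def multE (k r₀ r₁ q₀ q₁ q₂ : ℤ) : Matrix (Fin 4) (Fin 4) ℤ :=
  !![0, 0, q₀, q₁ * r₀;
     0, 0, q₁, q₀ + q₁ * r₁;
     1, 0, q₂, q₁ * k;
     0, 1, 0,  q₂]

lemma detFour {R : Type*} [CommRing R] (M : Matrix (Fin 4) (Fin 4) R) :
    M.det =
      M 0 0 * (M 1 1 * (M 2 2 * M 3 3 - M 2 3 * M 3 2) - M 1 2 * (M 2 1 * M 3 3 - M 2 3 * M 3 1)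
        + M 1 3 * (M 2 1 * M 3 2 - M 2 2 * M 3 1)) -
      M 0 1 * (M 1 0 * (M 2 2 * M 3 3 - M 2 3 * M 3 2) - M 1 2 * (M 2 0 * M 3 3 - M 2 3 * M 3 0)
        + M 1 3 * (M 2 0 * M 3 2 - M 2 2 * M 3 0)) +
      M 0 2 * (M 1 0 * (M 2 1 * M 3 3 - M 2 3 * M 3 1) - M 1 1 * (M 2 0 * M 3 3 - M 2 3 * M 3 0)
        + M 1 3 * (M 2 0 * M 3 1 - M 2 1 * M 3 0)) -
      M 0 3 * (M 1 0 * (M 2 1 * M 3 2 - M 2 2 * M 3 1) - M 1 1 * (M 2 0 * M 3 2 - M 2 2 * M 3 0)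
        + M 1 2 * (M 2 0 * M 3 1 - M 2 1 * M 3 0)) := by
  rw [Matrix.det_succ_row_zero]
  simp [Fin.sum_univ_succ, Matrix.det_fin_three, Matrix.submatrix_apply,
    show Fin.succAbove (1 : Fin 4) 2 = 3 from rfl, show Fin.succAbove (2 : Fin 4) 2 = 3 from rfl,
    show Fin.succAbove (3 : Fin 4) 2 = 2 from rfl]
  ring

/-- In `QH = ℤ[H,E]/(H² = kE + R, E² = Q)`, the characteristic polynomial of quantum
multiplication by `vE` on the basis `{1, H, E, HE}` is `(λ²-9)²` for the triangle
(`v=3, k=1, R=0, Q=1`), `λ(λ³-128)` for the tetrahedron (`v=4, k=2, R=0, Q=H`), and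
`(λ²-6λ-36)²` for the octahedron (`v=6, k=5, R=3, Q=E+1`). -/
theorem stmt7 :
    ((3 : ℤ) • multE 1 0 0 1 0 0).charpoly = (X ^ 2 - 9) ^ 2 ∧
    ((4 : ℤ) • multE 2 0 0 0 1 0).charpoly = X * (X ^ 3 - 128) ∧
    ((6 : ℤ) • multE 5 3 0 1 0 1).charpoly = (X ^ 2 - 6 * X - 36) ^ 2 := by
  refine ⟨?_, ?_, ?_⟩ <;>
  · rw [Matrix.charpoly, detFour]
    simp [multE, charmatrix_apply, Matrix.one_apply, Matrix.vecHead, Matrix.vecTail]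
    ring
end

section
/- The polynomial h₂(z) = 320z¹⁶ - 224128z¹⁵ - 1467885z¹⁴ + 5601117772z¹³ + 42700276243z¹² - 623885336112z¹¹ + 2513717360270z¹⁰ - 5265619809592z⁹ + 6655153864734z⁸ - 5265619809592z⁷ + 2513717360270z⁶ - 623885336112z⁵ + 42700276243z⁴ + 5601117772z³ - 1467885z² - 224128z + 320 factors over ℤ as (8 - 11z + 8z²)(1 - 671z + 2301z² - 671z³ + z⁴)(1 - 185z + 357z² - 185z³ + z⁴)(40 + 6279z + 81132z² - 178264z³ + 81132z⁴ + 6279z⁵ + 40z⁶), and every complex root of h₂ is either real or of unit modulus. -/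
open Polynomial

/-- The polynomial `h₂` arising in the analysis of index-4 discs on the icosahedral
Lagrangian. -/
noncomputable def h2 : Polynomial ℤ :=
  320 * X ^ 16 - 224128 * X ^ 15 - 1467885 * X ^ 14 + 5601117772 * X ^ 13
    + 42700276243 * X ^ 12 - 623885336112 * X ^ 11 + 2513717360270 * X ^ 10
    - 5265619809592 * X ^ 9 + 6655153864734 * X ^ 8 - 5265619809592 * X ^ 7
    + 2513717360270 * X ^ 6 - 623885336112 * X ^ 5 + 42700276243 * X ^ 4
    + 5601117772 * X ^ 3 - 1467885 * X ^ 2 - 224128 * X + 320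


-- key lemma: root of z^2 - w z + 1 with w real is real or unit modulus
lemma lemA (w : ℝ) (z : ℂ) (h : z ^ 2 - (w : ℂ) * z + 1 = 0) :
    z.im = 0 ∨ ‖z‖ = 1 := by
  by_cases him : z.im = 0
  · exact Or.inl him
  right
  have hconj : (starRingEnd ℂ z) ^ 2 - (w : ℂ) * (starRingEnd ℂ z) + 1 = 0 := by
    have := congrArg (starRingEnd ℂ) h
    push_cast at this
    simpa using this
  have hne : z ≠ starRingEnd ℂ z := by
    intro he
    exact him (Complex.conj_eq_iff_im.mp he.symm)
  have hfac : (z - starRingEnd ℂ z) * (z + starRingEnd ℂ z - w) = 0 := by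
    linear_combination h - hconj
  have hsum : z + starRingEnd ℂ z = w := by
    rcases mul_eq_zero.mp hfac with h1 | h1
    · exact absurd (sub_eq_zero.mp h1) hne
    · linear_combination h1
  have hprod : z * starRingEnd ℂ z = 1 := by
    linear_combination -h + z * hsum
  have h2 : (‖z‖) ^ 2 = 1 := by
    have := Complex.mul_conj z
    rw [hprod] at this
    have h3 : Complex.normSq z = 1 := by exact_mod_cast this.symm
    rw [Complex.sq_norm, h3]
  nlinarith [norm_nonneg z]

-- quartic palindromic handler
lemma quarticCase (a b : ℝ) (hD : 0 ≤ a ^ 2 - 4 * (b - 2)) (z : ℂ)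
    (h : 1 - (a : ℂ) * z + (b : ℂ) * z ^ 2 - (a : ℂ) * z ^ 3 + z ^ 4 = 0) :
    z.im = 0 ∨ ‖z‖ = 1 := by
  set s := Real.sqrt (a ^ 2 - 4 * (b - 2)) with hs_def
  have hs : s ^ 2 = a ^ 2 - 4 * (b - 2) := Real.sq_sqrt hD
  set w1 : ℝ := (a + s) / 2 with hw1
  set w2 : ℝ := (a - s) / 2 with hw2
  have hsum : (w1 : ℂ) + (w2 : ℂ) = (a : ℂ) := by push_cast [hw1, hw2]; ring
  have hprod : (w1 : ℂ) * (w2 : ℂ) = (b : ℂ) - 2 := by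
    have hs' : (s : ℂ) ^ 2 = (a : ℂ) ^ 2 - 4 * ((b : ℂ) - 2) := by exact_mod_cast congrArg (fun x : ℝ => (x : ℂ)) hs
    push_cast [hw1, hw2]
    linear_combination (-1/4 : ℂ) * hs'
  have key : (z ^ 2 - (w1 : ℂ) * z + 1) * (z ^ 2 - (w2 : ℂ) * z + 1) = 0 := by
    linear_combination h - (z ^ 3 + z) * hsum + z ^ 2 * hprod
  rcases mul_eq_zero.mp key with h' | h'
  · exact lemA w1 z h'
  · exact lemA w2 z h'

lemma sexticCase (z : ℂ)
    (h : 40 + 6279 * z + 81132 * z ^ 2 - 178264 * z ^ 3 + 81132 * z ^ 4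
        + 6279 * z ^ 5 + 40 * z ^ 6 = 0) :
    z.im = 0 ∨ ‖z‖ = 1 := by
  set f : ℝ → ℝ := fun w => 40 * w ^ 3 + 6279 * w ^ 2 + 81012 * w - 190822 with hf
  have hcont : ContinuousOn f (Set.univ) := (by continuity : Continuous f).continuousOn
  -- root 1 in [-150, -140]
  obtain ⟨w1, hw1m, hw1⟩ : ∃ w ∈ Set.Icc (-150 : ℝ) (-140), f w = 0 := by
    have := intermediate_value_Icc (by norm_num : (-150 : ℝ) ≤ -140)
      ((by continuity : Continuous f).continuousOn)
    have h0 : (0 : ℝ) ∈ Set.Icc (f (-150)) (f (-140)) := by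
      constructor <;> (simp only [hf]; norm_num)
    obtain ⟨w, hw, hfw⟩ := this h0
    exact ⟨w, hw, hfw⟩
  obtain ⟨w2, hw2m, hw2⟩ : ∃ w ∈ Set.Icc (-140 : ℝ) 0, f w = 0 := by
    have := intermediate_value_Icc' (by norm_num : (-140 : ℝ) ≤ 0)
      ((by continuity : Continuous f).continuousOn)
    have h0 : (0 : ℝ) ∈ Set.Icc (f 0) (f (-140)) := by
      constructor <;> (simp only [hf]; norm_num)
    obtain ⟨w, hw, hfw⟩ := this h0
    exact ⟨w, hw, hfw⟩
  obtain ⟨w3, hw3m, hw3⟩ : ∃ w ∈ Set.Icc (2 : ℝ) 3, f w = 0 := by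
    have := intermediate_value_Icc (by norm_num : (2 : ℝ) ≤ 3)
      ((by continuity : Continuous f).continuousOn)
    have h0 : (0 : ℝ) ∈ Set.Icc (f 2) (f 3) := by
      constructor <;> (simp only [hf]; norm_num)
    obtain ⟨w, hw, hfw⟩ := this h0
    exact ⟨w, hw, hfw⟩
  -- distinctness
  have hne140 : w1 ≠ -140 := by
    intro he; rw [he] at hw1; simp only [hf] at hw1; norm_num at hw1
  have hne140' : w2 ≠ -140 := by
    intro he; rw [he] at hw2; simp only [hf] at hw2; norm_num at hw2
  have h12 : w1 < w2 := lt_of_lt_of_le (lt_of_le_of_ne hw1m.2 hne140)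
    (le_of_lt (lt_of_le_of_ne hw2m.1 (Ne.symm hne140')))
  have h23 : w2 < w3 := lt_of_le_of_lt hw2m.2 (lt_of_lt_of_le (by norm_num) hw3m.1)
  have h13 : w1 < w3 := h12.trans h23
  simp only [hf] at hw1 hw2 hw3
  -- Vieta: symmetric functions
  have s12 : 40 * (w1 ^ 2 + w1 * w2 + w2 ^ 2) + 6279 * (w1 + w2) + 81012 = 0 := by
    have key : (w1 - w2) * (40 * (w1 ^ 2 + w1 * w2 + w2 ^ 2) + 6279 * (w1 + w2) + 81012)
        = (w1 - w2) * 0 := by linear_combination hw1 - hw2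
    exact mul_left_cancel₀ (sub_ne_zero.mpr h12.ne) key
  have s13 : 40 * (w1 ^ 2 + w1 * w3 + w3 ^ 2) + 6279 * (w1 + w3) + 81012 = 0 := by
    have key : (w1 - w3) * (40 * (w1 ^ 2 + w1 * w3 + w3 ^ 2) + 6279 * (w1 + w3) + 81012)
        = (w1 - w3) * 0 := by linear_combination hw1 - hw3
    exact mul_left_cancel₀ (sub_ne_zero.mpr h13.ne) key
  have e1 : 40 * (w1 + w2 + w3) + 6279 = 0 := by
    have key : (w2 - w3) * (40 * (w1 + w2 + w3) + 6279) = (w2 - w3) * 0 := by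
      linear_combination s12 - s13
    exact mul_left_cancel₀ (sub_ne_zero.mpr h23.ne) key
  have e2 : 40 * (w1 * w2 + w1 * w3 + w2 * w3) = 81012 := by
    linear_combination (w1 + w2) * e1 - s12
  have e3 : 40 * (w1 * w2 * w3) = 190822 := by
    linear_combination hw1 - w1 ^ 2 * e1 + w1 * e2
  -- cast to ℂ
  have e1c : 40 * ((w1 : ℂ) + w2 + w3) + 6279 = 0 := by exact_mod_cast congrArg (fun x : ℝ => (x : ℂ)) e1
  have e2c : 40 * ((w1 : ℂ) * w2 + (w1 : ℂ) * w3 + (w2 : ℂ) * w3) = 81012 := by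
    exact_mod_cast congrArg (fun x : ℝ => (x : ℂ)) e2
  have e3c : 40 * ((w1 : ℂ) * w2 * w3) = 190822 := by
    exact_mod_cast congrArg (fun x : ℝ => (x : ℂ)) e3
  have key : (40 : ℂ) * ((z ^ 2 - (w1 : ℂ) * z + 1) * (z ^ 2 - (w2 : ℂ) * z + 1)
      * (z ^ 2 - (w3 : ℂ) * z + 1)) = 0 := by
    linear_combination h - (z ^ 5 + z) * e1c + (z ^ 4 + z ^ 2) * e2c - z ^ 3 * e3c
      - 2 * z ^ 3 * e1c
  have key' := mul_eq_zero.mp key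
  rcases key' with h40 | key' 
  · norm_num at h40
  rcases mul_eq_zero.mp key' with key'' | h'
  · rcases mul_eq_zero.mp key'' with h' | h'
    · exact lemA w1 z h'
    · exact lemA w2 z h'
  · exact lemA w3 z h'


/-- `h₂` factors over `ℤ` as the displayed product, and every complex root of `h₂` is either
real or of unit modulus. -/
theorem stmt16 :
    h2 = (8 - 11 * X + 8 * X ^ 2)
          * (1 - 671 * X + 2301 * X ^ 2 - 671 * X ^ 3 + X ^ 4)
          * (1 - 185 * X + 357 * X ^ 2 - 185 * X ^ 3 + X ^ 4)
          * (40 + 6279 * X + 81132 * X ^ 2 - 178264 * X ^ 3 + 81132 * X ^ 4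
              + 6279 * X ^ 5 + 40 * X ^ 6) ∧
    ∀ z : ℂ, Polynomial.aeval z h2 = 0 → z.im = 0 ∨ ‖z‖ = 1 := by
  have hfac : h2 = (8 - 11 * X + 8 * X ^ 2)
          * (1 - 671 * X + 2301 * X ^ 2 - 671 * X ^ 3 + X ^ 4)
          * (1 - 185 * X + 357 * X ^ 2 - 185 * X ^ 3 + X ^ 4)
          * (40 + 6279 * X + 81132 * X ^ 2 - 178264 * X ^ 3 + 81132 * X ^ 4
              + 6279 * X ^ 5 + 40 * X ^ 6) := by
    unfold h2; ring
  refine ⟨hfac, fun z hz => ?_⟩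
  rw [hfac] at hz
  simp only [map_mul, map_add, map_sub, map_pow, aeval_X, map_ofNat, map_one] at hz
  rcases mul_eq_zero.mp hz with hz' | h4
  · rcases mul_eq_zero.mp hz' with hz'' | h3
    · rcases mul_eq_zero.mp hz'' with h1 | h2
      · refine lemA (11 / 8) z ?_
        push_cast
        linear_combination (1 / 8 : ℂ) * h1
      · refine quarticCase 671 2301 (by norm_num) z ?_
        push_cast
        linear_combination h2
    · refine quarticCase 185 357 (by norm_num) z ?_
      push_cast
      linear_combination h3
  · exact sexticCase z (by linear_combination h4)
end
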